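/- Potential function for binary CSR games on undirected networks: fix a CSR game with sum utilities whose access cost function d is symmetric and whose weights are binary (r(i,α) ∈ {0,1}; write S_i = {α : r(i,α) = 1}). For a placement P define Φ_0(P) = |{i ∈ V : P(i) ∈ S_i}|, Φ_i(P) = min(D, min{ d(i,j) : j ≠ i, P(j) = P(i) }), and let Λ(P) be the list of the values Φ_i(P), i ∈ V, sorted in nondecreasing order. If a node i strictly decreases its cost by a unilateral deviation, i.e., Q = P[i ↦ β] with cost_i(Q) < cost_i(P), then either Φ_0(Q) > Φ_0(P), or Φ_0(Q) = Φ_0(P) and Λ(Q) is strictly greater than Λ(P) in the lexicographic order on lists of length |V|. -/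

import Mathlib

open Finset

/-- Access cost of node `i` for object `α` under placement `P`. -/
noncomputable def accessCost {V O : Type*} [Fintype V] [DecidableEq O]
    (d : V → V → ℝ) (D : ℝ) (P : V → O) (i : V) (α : O) : ℝ :=
  haveI := Classical.decEq ℝ
  (insert D ((Finset.univ.filter (fun j => P j = α)).image (d i))).min'
    (Finset.insert_nonempty _ _)

/-- Total cost of node `i` under placement `P` (sum utilities). -/
noncomputable def nodeCost {V O : Type*} [Fintype V] [Fintype O] [DecidableEq O]
    (d : V → V → ℝ) (r : V → O → ℝ) (D : ℝ) (P : V → O) (i : V) : ℝ :=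
  ∑ α : O, r i α * accessCost d D P i α

/-- `Φ_i(P)`: distance from `i` to the nearest other node holding the same
object as `i` (or the server cost `D`). -/
noncomputable def phiNode {V O : Type*} [Fintype V] [DecidableEq V] [DecidableEq O]
    (d : V → V → ℝ) (D : ℝ) (P : V → O) (i : V) : ℝ :=
  haveI := Classical.decEq ℝ
  (insert D ((Finset.univ.filter (fun j => j ≠ i ∧ P j = P i)).image (d i))).min'
    (Finset.insert_nonempty _ _)

/-- `Φ_0(P)`: the number of nodes storing an object they are interested in. -/
noncomputable def phiZero {V O : Type*} [Fintype V]
    (r : V → O → ℝ) (P : V → O) : ℕ :=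
  haveI := Classical.decEq ℝ
  (Finset.univ.filter (fun i => r i (P i) = 1)).card

/-- `Λ(P)`: the multiset of values `Φ_i(P)` sorted in nondecreasing order. -/
noncomputable def phiList {V O : Type*} [Fintype V] [DecidableEq V] [DecidableEq O]
    (d : V → V → ℝ) (D : ℝ) (P : V → O) : List ℝ :=
  (Finset.univ.val.map (fun i : V => phiNode d D P i)).sort (· ≤ ·)

/- ### Auxiliary lemmas -/

private lemma min'_congr {s t : Finset ℝ} (hs : s.Nonempty) (ht : t.Nonempty) (h : s = t) :
    s.min' hs = t.min' ht := by subst h; rfl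

/-- Sorting a multiset whose distinguished element is a lower bound. -/
private lemma sort_cons_min (a : ℝ) (s : Multiset ℝ) (h : ∀ b ∈ s, a ≤ b) :
    (a ::ₘ s).sort (· ≤ ·) = a :: s.sort (· ≤ ·) := by
  have hperm : List.Perm ((a ::ₘ s).sort (· ≤ ·)) (a :: s.sort (· ≤ ·)) := by
    rw [← Multiset.coe_eq_coe, ← Multiset.cons_coe, Multiset.sort_eq, Multiset.sort_eq]
  have hsorted : List.Pairwise (· ≤ ·) (a :: s.sort (· ≤ ·)) := by
    rw [List.pairwise_cons]
    exact ⟨fun b hb => h b (by simpa using hb), Multiset.pairwise_sort _ _⟩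
  exact hperm.eq_of_pairwise' (Multiset.pairwise_sort _ _) hsorted

private lemma rel_exists {α β : Type*} {r : α → β → Prop} {s : Multiset α} {t : Multiset β}
    (h : Multiset.Rel r s t) : ∀ b ∈ t, ∃ a ∈ s, r a b := by
  induction h with
  | zero => simp
  | @cons a b s' t' hab _ ih =>
    intro c hc
    rcases Multiset.mem_cons.1 hc with rfl | hc
    · exact ⟨a, Multiset.mem_cons_self _ _, hab⟩
    · rcases ih c hc with ⟨a', ha', h'⟩
      exact ⟨a', Multiset.mem_cons_of_mem ha', h'⟩

/-- Key combinatorial lemma: if `x < y` and every element `b` of `t` is matched to an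
element `a` of `s` with `min a y ≤ b`, then the sorted list of `x ::ₘ s` is
lexicographically smaller than the sorted list of `y ::ₘ t`. -/
private lemma lex_of_rel (x y : ℝ) (hxy : x < y) :
    ∀ (s t : Multiset ℝ), Multiset.Rel (fun a b => min a y ≤ b) s t →
      List.Lex (· < ·) ((x ::ₘ s).sort (· ≤ ·)) ((y ::ₘ t).sort (· ≤ ·)) := by
  intro s
  induction s using Multiset.strongInductionOn with
  | ih s ih =>
    intro t hrel
    have hne : (x ::ₘ s).toFinset.Nonempty := by simp
    set m := (x ::ₘ s).toFinset.min' hne with hm_def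
    have hmmem : m ∈ x ::ₘ s :=
      Multiset.mem_toFinset.1 ((x ::ₘ s).toFinset.min'_mem hne)
    have hmin : ∀ z ∈ x ::ₘ s, m ≤ z := fun z hz =>
      Finset.min'_le _ _ (Multiset.mem_toFinset.2 hz)
    have hmx : m ≤ x := hmin x (Multiset.mem_cons_self _ _)
    have hmy : m < y := lt_of_le_of_lt hmx hxy
    have htlb : ∀ b ∈ t, m ≤ b := by
      intro b hb
      rcases rel_exists hrel b hb with ⟨a, ha, hab⟩
      exact (le_min (hmin a (Multiset.mem_cons_of_mem ha)) hmy.le).trans hab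
    by_cases hmt : m ∈ t
    · rw [← Multiset.cons_erase hmt] at hrel
      rcases Multiset.rel_cons_right.1 hrel with ⟨a, s', hab, hrel', hs⟩
      have has : a ∈ s := hs ▸ Multiset.mem_cons_self _ _
      have ham : a = m := by
        refine le_antisymm ?_ (hmin a (Multiset.mem_cons_of_mem has))
        rcases le_or_gt a y with h | h
        · rwa [min_eq_left h] at hab
        · exfalso; rw [min_eq_right h.le] at hab; exact absurd hab (not_le.2 hmy)
      rw [ham] at hs
      have hxs : x ::ₘ s = m ::ₘ (x ::ₘ s') := by rw [hs, Multiset.cons_swap]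
      have hyt : y ::ₘ t = m ::ₘ (y ::ₘ t.erase m) := by
        conv_lhs => rw [← Multiset.cons_erase hmt]
        rw [Multiset.cons_swap]
      have hb1 : ∀ b ∈ x ::ₘ s', m ≤ b := by
        intro b hb
        rcases Multiset.mem_cons.1 hb with rfl | hb
        · exact hmx
        · exact hmin b (Multiset.mem_cons_of_mem (hs ▸ Multiset.mem_cons_of_mem hb))
      have hb2 : ∀ b ∈ y ::ₘ t.erase m, m ≤ b := by
        intro b hb
        rcases Multiset.mem_cons.1 hb with rfl | hb
        · exact hmy.le
        · exact htlb b (Multiset.mem_of_mem_erase hb)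
      rw [hxs, hyt, sort_cons_min m _ hb1, sort_cons_min m _ hb2]
      refine List.Lex.cons (ih s' ?_ (t.erase m) hrel')
      rw [hs]; exact Multiset.lt_cons_self s' m
    · set u := (x ::ₘ s).erase m with hu
      have hxs : x ::ₘ s = m ::ₘ u := (Multiset.cons_erase hmmem).symm
      have hub : ∀ b ∈ u, m ≤ b := fun b hb => hmin b (Multiset.mem_of_mem_erase hb)
      obtain ⟨c, l, hcl⟩ : ∃ c l, (y ::ₘ t).sort (· ≤ ·) = c :: l := by
        cases hL : (y ::ₘ t).sort (· ≤ ·) with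
        | nil =>
          exfalso
          have h0 := Multiset.sort_eq (y ::ₘ t) (· ≤ ·)
          rw [hL] at h0
          simp at h0
        | cons c l => exact ⟨c, l, rfl⟩
      rw [hxs, sort_cons_min _ _ hub, hcl]
      have hc : c ∈ y ::ₘ t := by
        rw [← Multiset.mem_sort (· ≤ ·), hcl]; exact List.mem_cons_self
      have hmc : m < c := by
        rcases Multiset.mem_cons.1 hc with rfl | hc'
        · exact hmy
        · exact lt_of_le_of_ne (htlb c hc') fun h => hmt (h ▸ hc')
      exact List.Lex.rel hmc

/-- Potential function argument for binary CSR games on undirected networks: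
any strict unilateral improvement step strictly increases the potential
`(Φ_0, Λ)` lexicographically. -/
theorem binary_csr_potential_increases
    {V O : Type*} [Fintype V] [Fintype O] [Nonempty V] [Nonempty O]
    [DecidableEq V] [DecidableEq O]
    (d : V → V → ℝ) (r : V → O → ℝ) (D : ℝ)
    (hd_nonneg : ∀ i j, 0 ≤ d i j) (hd_diag : ∀ i, d i i = 0)
    (hr_nonneg : ∀ i α, 0 ≤ r i α) (hD : ∀ i j, d i j ≤ D)
    (hsym : ∀ i j, d i j = d j i)
    (hbin : ∀ i α, r i α = 0 ∨ r i α = 1)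
    (P : V → O) (i : V) (β : O) :
    nodeCost d r D (Function.update P i β) i < nodeCost d r D P i →
      phiZero r P < phiZero r (Function.update P i β) ∨
      (phiZero r (Function.update P i β) = phiZero r P ∧
        List.Lex (· < ·) (phiList d D P) (phiList d D (Function.update P i β))) := by
  intro hcost
  set Q := Function.update P i β with hQ
  have hQi : Q i = β := Function.update_self i β P
  have hQj : ∀ j, j ≠ i → Q j = P j := fun j hj => Function.update_of_ne hj β P
  -- the deviation is nontrivial
  have hβ : β ≠ P i := by
    intro h
    rw [hQ, h, Function.update_eq_self] at hcost
    exact lt_irrefl _ hcost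
  have hD0 : (0 : ℝ) ≤ D := (hd_diag i) ▸ hD i i
  -- nonnegativity of phiNode
  have phi_nonneg : ∀ (P' : V → O) (j : V), 0 ≤ phiNode d D P' j := by
    intro P' j
    unfold phiNode
    apply Finset.le_min'
    intro z hz
    simp only [Finset.mem_insert, Finset.mem_image, Finset.mem_filter] at hz
    rcases hz with rfl | ⟨k, _, rfl⟩
    · exact hD0
    · exact hd_nonneg j k
  -- access cost of a held object is zero
  have acc_self : ∀ (P' : V → O) (γ : O), P' i = γ → accessCost d D P' i γ = 0 := by
    intro P' γ h
    unfold accessCost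
    apply le_antisymm
    · apply Finset.min'_le
      simp only [Finset.mem_insert, Finset.mem_image, Finset.mem_filter]
      exact Or.inr ⟨i, ⟨Finset.mem_univ i, h⟩, hd_diag i⟩
    · apply Finset.le_min'
      intro z hz
      simp only [Finset.mem_insert, Finset.mem_image, Finset.mem_filter] at hz
      rcases hz with rfl | ⟨k, _, rfl⟩
      · exact hD0
      · exact hd_nonneg i k
  -- congruence for access costs
  have acc_congr : ∀ (P₁ P₂ : V → O) (γ₁ γ₂ : O), (∀ j, P₁ j = γ₁ ↔ P₂ j = γ₂) →
      accessCost d D P₁ i γ₁ = accessCost d D P₂ i γ₂ := by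
    intro P₁ P₂ γ₁ γ₂ h
    unfold accessCost
    apply min'_congr
    congr 1
    congr 1
    ext j
    simp only [Finset.mem_filter, Finset.mem_univ, true_and, h]
  -- Fact A: access cost of old object under Q equals phiNode of P at i
  have factA : accessCost d D Q i (P i) = phiNode d D P i := by
    unfold accessCost phiNode
    apply min'_congr
    congr 1
    congr 1
    ext j
    simp only [Finset.mem_filter, Finset.mem_univ, true_and]
    constructor
    · intro h
      by_cases hji : j = i
      · exfalso; rw [hji, hQi] at h; exact hβ h
      · exact ⟨hji, by rwa [hQj j hji] at h⟩
    · rintro ⟨hji, h⟩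
      rw [hQj j hji]; exact h
  -- Fact B: access cost of new object under P equals phiNode of Q at i
  have factB : accessCost d D P i β = phiNode d D Q i := by
    unfold accessCost phiNode
    apply min'_congr
    congr 1
    congr 1
    ext j
    simp only [Finset.mem_filter, Finset.mem_univ, true_and, hQi]
    constructor
    · intro h
      by_cases hji : j = i
      · exfalso; rw [hji] at h; exact hβ h.symm
      · exact ⟨hji, by rwa [hQj j hji]⟩
    · rintro ⟨hji, h⟩
      rwa [hQj j hji] at h
  -- Fact C: other access costs are unchanged
  have factC : ∀ γ : O, γ ≠ P i → γ ≠ β → accessCost d D Q i γ = accessCost d D P i γ := by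
    intro γ h1 h2
    apply acc_congr
    intro j
    by_cases hji : j = i
    · subst hji
      rw [hQi]
      constructor
      · intro h; exact absurd h.symm h2
      · intro h; exact absurd h.symm h1
    · rw [hQj j hji]
  -- compute the cost difference
  have hsum : nodeCost d r D P i - nodeCost d r D Q i =
      r i β * phiNode d D Q i - r i (P i) * phiNode d D P i := by
    unfold nodeCost
    rw [← Finset.sum_sub_distrib]
    have hfun : ∀ γ : O, r i γ * accessCost d D P i γ - r i γ * accessCost d D Q i γ =
        r i γ * (accessCost d D P i γ - accessCost d D Q i γ) := fun γ => by ring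
    calc (∑ γ : O, (r i γ * accessCost d D P i γ - r i γ * accessCost d D Q i γ))
        = ∑ γ : O, r i γ * (accessCost d D P i γ - accessCost d D Q i γ) := by
          exact Finset.sum_congr rfl fun γ _ => hfun γ
      _ = r i β * (accessCost d D P i β - accessCost d D Q i β) +
          ∑ γ ∈ (Finset.univ \ {β}),
            r i γ * (accessCost d D P i γ - accessCost d D Q i γ) := by
          exact Finset.sum_eq_add_sum_sdiff_singleton_of_mem (Finset.mem_univ β) _
      _ = r i β * (accessCost d D P i β - accessCost d D Q i β) +
          r i (P i) * (accessCost d D P i (P i) - accessCost d D Q i (P i)) := by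
          congr 1
          apply Finset.sum_eq_single_of_mem (P i)
          · simp [Ne.symm hβ]
          · intro γ hγ hne
            have hγβ : γ ≠ β := by
              simp only [Finset.mem_sdiff, Finset.mem_singleton] at hγ
              exact hγ.2
            rw [factC γ hne hγβ]
            ring
      _ = r i β * phiNode d D Q i - r i (P i) * phiNode d D P i := by
          rw [factB, acc_self Q β hQi, acc_self P (P i) rfl, factA]
          ring
  have hkey : r i (P i) * phiNode d D P i < r i β * phiNode d D Q i := by
    have : 0 < nodeCost d r D P i - nodeCost d r D Q i := by linarith
    rw [hsum] at this
    linarith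
  -- r i β must be 1
  have hrβ : r i β = 1 := by
    rcases hbin i β with h | h
    · exfalso
      rw [h, zero_mul] at hkey
      exact absurd hkey (not_lt.2 (mul_nonneg (hr_nonneg i (P i)) (phi_nonneg P i)))
    · exact h
  rcases hbin i (P i) with hrP | hrP
  · -- Φ₀ strictly increases
    left
    unfold phiZero
    have hset : (Finset.univ.filter fun j => r j (Q j) = 1) =
        insert i (Finset.univ.filter fun j => r j (P j) = 1) := by
      ext j
      simp only [Finset.mem_filter, Finset.mem_univ, true_and, Finset.mem_insert]
      by_cases hji : j = i
      · subst hji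
        simp [hQi, hrβ]
      · rw [hQj j hji]
        constructor
        · intro h; exact Or.inr h
        · rintro (h | h)
          · exact absurd h hji
          · exact h
    rw [hset, Finset.card_insert_of_notMem]
    · exact Nat.lt_succ_self _
    · simp only [Finset.mem_filter, Finset.mem_univ, true_and, hrP]
      norm_num
  · -- Φ₀ unchanged, Λ strictly increases
    right
    constructor
    · unfold phiZero
      congr 1
      ext j
      simp only [Finset.mem_filter, Finset.mem_univ, true_and]
      by_cases hji : j = i
      · subst hji
        rw [hQi, hrβ, hrP]
      · rw [hQj j hji]
    · -- the lexicographic increase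
      have hxy : phiNode d D P i < phiNode d D Q i := by
        rw [hrP, one_mul] at hkey
        rw [hrβ, one_mul] at hkey
        exact hkey
      -- Fact E : for j ≠ i, min (Φ_j(P)) (Φ_i(Q)) ≤ Φ_j(Q)
      have factE : ∀ j, j ≠ i → min (phiNode d D P j) (phiNode d D Q i) ≤ phiNode d D Q j := by
        intro j hji
        conv_rhs => unfold phiNode
        apply Finset.le_min'
        intro z hz
        simp only [Finset.mem_insert, Finset.mem_image, Finset.mem_filter, Finset.mem_univ,
          true_and] at hz
        rcases hz with rfl | ⟨k, ⟨hkj, hk⟩, rfl⟩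
        · refine (min_le_left _ _).trans ?_
          unfold phiNode
          exact Finset.min'_le _ _ (Finset.mem_insert_self _ _)
        · by_cases hki : k = i
          · refine (min_le_right _ _).trans ?_
            have hQij : Q j = Q i := by
              rw [hki] at hk
              exact hk.symm
            have hmem : d i j ∈ insert D ((Finset.univ.filter
                (fun l => l ≠ i ∧ Q l = Q i)).image (d i)) := by
              simp only [Finset.mem_insert, Finset.mem_image, Finset.mem_filter, Finset.mem_univ,
                true_and]
              exact Or.inr ⟨j, ⟨hji, hQij⟩, rfl⟩
            unfold phiNode
            refine le_trans (Finset.min'_le _ _ hmem) ?_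
            rw [hki, hsym i j]
          · refine (min_le_left _ _).trans ?_
            unfold phiNode
            apply Finset.min'_le
            simp only [Finset.mem_insert, Finset.mem_image, Finset.mem_filter, Finset.mem_univ,
              true_and]
            refine Or.inr ⟨k, ⟨hkj, ?_⟩, rfl⟩
            rw [← hQj k hki, ← hQj j hji]
            exact hk
      -- decompose univ as i together with the rest
      have huniv : (Finset.univ : Finset V).val = i ::ₘ (Finset.univ.erase i).val := by
        rw [Finset.erase_val]
        exact (Multiset.cons_erase (by simp)).symm
      unfold phiList
      rw [huniv, Multiset.map_cons, Multiset.map_cons]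
      apply lex_of_rel _ _ hxy
      rw [Multiset.rel_map]
      apply Multiset.rel_refl_of_refl_on
      intro j hj
      have hji : j ≠ i := by
        have : j ∈ Finset.univ.erase i := hj
        exact (Finset.mem_erase.1 this).1
      exact factE j hji
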